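/- (Scaled error rates, part i.) Under Assumption 4 with d ∈ ℕ and K ≥ 2 fixed and n/m → r ∈ (0,∞), ñ/m → r̃ ∈ (0,∞), write c̄ := √m·Cov(I,X), E_k := √m(Ĉov_k(Ĩ,X̃) − Cov(I,X)) for the k-th fold error, and E := √m(Ĉov(Ĩ,X̃) − Cov(I,X)) for the full-sample error. Then for each fixed k ∈ [K], ‖c̄ᵀE_k‖_op = O_p(m^{-1/2}) and ‖c̄ᵀE‖_op = O_p(m^{-1/2}); that is, for every δ > 0 there exist C' > 0 and M such that for all m ≥ M the probability that √m times the respective operator norm exceeds C' is less than δ. -/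

import Mathlib

open MeasureTheory ProbabilityTheory Filter Matrix
open scoped Topology NNReal ENNReal

noncomputable section

/-- Cross-covariance matrix of two centered random vectors (equal to `E[U Vᵀ]`
for centered `U, V`). -/
def covMat {Ω : Type*} [MeasurableSpace Ω] (μ : Measure Ω) {ι κ : Type*}
    [Fintype ι] [Fintype κ] (U : Ω → ι → ℝ) (V : Ω → κ → ℝ) : Matrix ι κ ℝ :=
  Matrix.of fun i j => ∫ ω, U ω i * V ω j ∂μ

/-- Cross-covariance vector of a centered random vector and a centered
random variable. -/
def covVec {Ω : Type*} [MeasurableSpace Ω] (μ : Measure Ω) {ι : Type*}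
    [Fintype ι] (U : Ω → ι → ℝ) (Y : Ω → ℝ) : ι → ℝ :=
  fun i => ∫ ω, U ω i * Y ω ∂μ

/-- Variance (covariance) matrix of a random vector. -/
def varMat {Ω : Type*} [MeasurableSpace Ω] (μ : Measure Ω) {ι : Type*} [Fintype ι]
    (Z : Ω → ι → ℝ) : Matrix ι ι ℝ :=
  Matrix.of fun i j =>
    ∫ ω, Z ω i * Z ω j ∂μ - (∫ ω, Z ω i ∂μ) * (∫ ω, Z ω j ∂μ)

/-- Euclidean (ℓ2) norm of a finite-dimensional real vector. -/
def norm2 {ι : Type*} [Fintype ι] (v : ι → ℝ) : ℝ := Real.sqrt (∑ i, v i ^ 2)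

/-- ℓ0 "norm": number of nonzero entries. -/
def sparsity {ι : Type*} [Fintype ι] (v : ι → ℝ) : ℕ :=
  (Finset.univ.filter fun i => v i ≠ 0).card

/-- ℓ2 → ℓ2 operator norm of a real matrix. -/
def opNorm {ι κ : Type*} [Fintype ι] [Fintype κ] (A : Matrix ι κ ℝ) : ℝ :=
  sSup {y : ℝ | ∃ x : κ → ℝ, norm2 x ≤ 1 ∧ y = norm2 (A *ᵥ x)}

/-- Empirical cross-covariance matrix `Ĉov(Ĩ,X̃)` from the first `nt` observations. -/
def covHat {Ω : Type*} {m d : ℕ} (It : ℕ → Ω → Fin m → ℝ) (Xt : ℕ → Ω → Fin d → ℝ)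
    (nt : ℕ) (ω : Ω) : Matrix (Fin m) (Fin d) ℝ :=
  Matrix.of fun k l => (nt : ℝ)⁻¹ * ∑ j ∈ Finset.range nt, It j ω k * Xt j ω l

/-- Empirical cross-covariance `Ĉov(I,Y)` from the first `n` observations. -/
def covYHat {Ω : Type*} {m : ℕ} (I : ℕ → Ω → Fin m → ℝ) (Y : ℕ → Ω → ℝ)
    (n : ℕ) (ω : Ω) : Fin m → ℝ :=
  fun k => (n : ℝ)⁻¹ * ∑ i ∈ Finset.range n, I i ω k * Y i ω

/-- Sample moment `ĝ_N(β) = (1/n) Σ I_i Y_i − ((1/ñ) Σ Ĩ_j X̃_jᵀ) β`. -/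
def ghat {Ω : Type*} {m d : ℕ} (I : ℕ → Ω → Fin m → ℝ) (Y : ℕ → Ω → ℝ)
    (It : ℕ → Ω → Fin m → ℝ) (Xt : ℕ → Ω → Fin d → ℝ)
    (n nt : ℕ) (ω : Ω) (b : Fin d → ℝ) : Fin m → ℝ :=
  fun k => covYHat I Y n ω k - (covHat It Xt nt ω *ᵥ b) k

/-- Within-fold empirical cross-covariance: fold `k` (of size `q`) consists of the
observations with indices in `[k·q, (k+1)·q)`. -/
def foldCovHat {Ω : Type*} {m d : ℕ} (It : ℕ → Ω → Fin m → ℝ) (Xt : ℕ → Ω → Fin d → ℝ)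
    (q k : ℕ) (ω : Ω) : Matrix (Fin m) (Fin d) ℝ :=
  Matrix.of fun a l => (q : ℝ)⁻¹ * ∑ j ∈ Finset.Ico (k * q) ((k + 1) * q), It j ω a * Xt j ω l

/-- Cross-fold moment matrix `C_XX = (m/(K(K−1))) Σ_{h≠k} Ĉov_h(Ĩ,X̃)ᵀ Ĉov_k(Ĩ,X̃)`. -/
def CXXmat {Ω : Type*} {m d : ℕ} (It : ℕ → Ω → Fin m → ℝ) (Xt : ℕ → Ω → Fin d → ℝ)
    (K q : ℕ) (ω : Ω) : Matrix (Fin d) (Fin d) ℝ :=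
  ((m : ℝ) / ((K : ℝ) * ((K : ℝ) - 1))) •
    ∑ p ∈ (Finset.univ : Finset (Fin K × Fin K)).filter (fun p => p.1 ≠ p.2),
      (foldCovHat It Xt q (p.1 : ℕ) ω)ᵀ * foldCovHat It Xt q (p.2 : ℕ) ω

/-- Cross moment `C_XY = m · Ĉov(Ĩ,X̃)ᵀ Ĉov(I,Y)`. -/
def CXYvec {Ω : Type*} {m d : ℕ} (I : ℕ → Ω → Fin m → ℝ) (Y : ℕ → Ω → ℝ)
    (It : ℕ → Ω → Fin m → ℝ) (Xt : ℕ → Ω → Fin d → ℝ)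
    (n nt : ℕ) (ω : Ω) : Fin d → ℝ :=
  (m : ℝ) • ((covHat It Xt nt ω)ᵀ *ᵥ covYHat I Y n ω)

section AuxNorm
variable {ι κ : Type*} [Fintype ι] [Fintype κ]

lemma norm2_nonneg (v : ι → ℝ) : 0 ≤ norm2 v := Real.sqrt_nonneg _

lemma sq_norm2 (v : ι → ℝ) : norm2 v ^ 2 = ∑ i, v i ^ 2 :=
  Real.sq_sqrt (Finset.sum_nonneg fun _ _ => sq_nonneg _)

lemma norm2_zero : norm2 (0 : ι → ℝ) = 0 := by simp [norm2]

lemma norm2_smul (cst : ℝ) (v : ι → ℝ) : norm2 (cst • v) = |cst| * norm2 v := by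
  simp only [norm2, Pi.smul_apply, smul_eq_mul, mul_pow, ← Finset.mul_sum]
  rw [Real.sqrt_mul (sq_nonneg cst), Real.sqrt_sq_eq_abs]

lemma elem_le_frob (A : Matrix ι κ ℝ) {x : κ → ℝ} (hx : norm2 x ≤ 1) :
    norm2 (A *ᵥ x) ≤ Real.sqrt (∑ i, ∑ j, A i j ^ 2) := by
  have hx2 : ∑ j, x j ^ 2 ≤ 1 := by
    have := sq_norm2 x
    nlinarith [norm2_nonneg x]
  apply Real.sqrt_le_sqrt
  have : ∀ i, (A *ᵥ x) i ^ 2 ≤ ∑ j, A i j ^ 2 := by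
    intro i
    have hcs := Finset.sum_mul_sq_le_sq_mul_sq Finset.univ (fun j => A i j) x
    have : (A *ᵥ x) i = ∑ j, A i j * x j := by simp [Matrix.mulVec, dotProduct]
    rw [this]
    calc (∑ j, A i j * x j) ^ 2 ≤ (∑ j, A i j ^ 2) * ∑ j, x j ^ 2 := hcs
      _ ≤ (∑ j, A i j ^ 2) * 1 := by
          apply mul_le_mul_of_nonneg_left hx2 (Finset.sum_nonneg fun _ _ => sq_nonneg _)
      _ = ∑ j, A i j ^ 2 := mul_one _
  exact Finset.sum_le_sum fun i _ => this i

lemma bddAbove_opSet (A : Matrix ι κ ℝ) :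
    BddAbove {y : ℝ | ∃ x : κ → ℝ, norm2 x ≤ 1 ∧ y = norm2 (A *ᵥ x)} := by
  refine ⟨Real.sqrt (∑ i, ∑ j, A i j ^ 2), ?_⟩
  rintro y ⟨x, hx, rfl⟩
  exact elem_le_frob A hx

lemma zero_mem_opSet (A : Matrix ι κ ℝ) :
    (0:ℝ) ∈ {y : ℝ | ∃ x : κ → ℝ, norm2 x ≤ 1 ∧ y = norm2 (A *ᵥ x)} := by
  refine ⟨0, by simp [norm2_zero], ?_⟩
  rw [Matrix.mulVec_zero, norm2_zero]

lemma opNorm_nonneg (A : Matrix ι κ ℝ) : 0 ≤ opNorm A :=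
  le_csSup (bddAbove_opSet A) (zero_mem_opSet A)

lemma opNorm_le_frob (A : Matrix ι κ ℝ) :
    opNorm A ≤ Real.sqrt (∑ i, ∑ j, A i j ^ 2) := by
  apply csSup_le ⟨0, zero_mem_opSet A⟩
  rintro y ⟨x, hx, rfl⟩
  exact elem_le_frob A hx

lemma norm2_mulVec_le (A : Matrix ι κ ℝ) (x : κ → ℝ) :
    norm2 (A *ᵥ x) ≤ opNorm A * norm2 x := by
  rcases eq_or_lt_of_le (norm2_nonneg x) with h0 | h0
  · have hx : x = 0 := by
      funext j
      have h1 : ∑ j, x j ^ 2 = 0 := by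
        have := sq_norm2 x; rw [← h0] at this; simpa using this.symm
      have := (Finset.sum_eq_zero_iff_of_nonneg (fun j _ => sq_nonneg (x j))).mp h1 j
        (Finset.mem_univ j)
      exact pow_eq_zero_iff (n := 2) (by norm_num) |>.mp this
    rw [hx, Matrix.mulVec_zero, norm2_zero]
    have : norm2 (0:κ→ℝ) = 0 := norm2_zero
    rw [this, mul_zero]
  · have hmem : norm2 (A *ᵥ ((norm2 x)⁻¹ • x)) ∈
        {y : ℝ | ∃ x : κ → ℝ, norm2 x ≤ 1 ∧ y = norm2 (A *ᵥ x)} := by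
      refine ⟨(norm2 x)⁻¹ • x, ?_, rfl⟩
      rw [norm2_smul, abs_of_nonneg (inv_nonneg.mpr (norm2_nonneg x)),
        inv_mul_cancel₀ (ne_of_gt h0)]
    have hle := le_csSup (bddAbove_opSet A) hmem
    rw [Matrix.mulVec_smul, norm2_smul, abs_of_nonneg (inv_nonneg.mpr (norm2_nonneg x))] at hle
    calc norm2 (A *ᵥ x) = norm2 x * ((norm2 x)⁻¹ * norm2 (A *ᵥ x)) := by
          field_simp
      _ ≤ norm2 x * opNorm A := by
          apply mul_le_mul_of_nonneg_left _ (norm2_nonneg x)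
          simpa [smul_smul, opNorm] using hle
      _ = opNorm A * norm2 x := mul_comm _ _

lemma quadform_le (V : Matrix ι ι ℝ) (x : ι → ℝ) :
    ∑ i, ∑ j, x i * V i j * x j ≤ opNorm V * ∑ i, x i ^ 2 := by
  have h1 : ∑ i, ∑ j, x i * V i j * x j = ∑ i, x i * (V *ᵥ x) i := by
    simp [Matrix.mulVec, dotProduct, Finset.mul_sum, mul_assoc]
  rw [h1]
  have hcs : (∑ i, x i * (V *ᵥ x) i) ^ 2 ≤ (∑ i, x i ^ 2) * ∑ i, (V *ᵥ x) i ^ 2 :=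
    Finset.sum_mul_sq_le_sq_mul_sq Finset.univ x _
  have h2 : ∑ i, x i * (V *ᵥ x) i ≤ norm2 x * norm2 (V *ᵥ x) := by
    have ha : ∑ i, x i * (V *ᵥ x) i ≤ Real.sqrt ((∑ i, x i * (V *ᵥ x) i) ^ 2) := by
      rw [Real.sqrt_sq_eq_abs]; exact le_abs_self _
    have hb := Real.sqrt_le_sqrt hcs
    rw [Real.sqrt_mul (Finset.sum_nonneg fun _ _ => sq_nonneg _)] at hb
    exact ha.trans hb
  calc ∑ i, x i * (V *ᵥ x) i ≤ norm2 x * norm2 (V *ᵥ x) := h2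
    _ ≤ norm2 x * (opNorm V * norm2 x) :=
        mul_le_mul_of_nonneg_left (norm2_mulVec_le V x) (norm2_nonneg x)
    _ = opNorm V * (norm2 x * norm2 x) := by ring
    _ = opNorm V * ∑ i, x i ^ 2 := by rw [← sq_norm2 x]; ring
end AuxNorm


variable {Ωm : Type*} [MeasurableSpace Ωm] {μ : Measure Ωm} [IsProbabilityMeasure μ]

lemma mul_memℒp' {f g : Ωm → ℝ} {p q r : ℝ≥0∞} (hf : MemLp f p μ) (hg : MemLp g q μ)
    (hpqr : 1 / r = 1 / p + 1 / q) : MemLp (fun ω => f ω * g ω) r μ := by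
  haveI : ENNReal.HolderTriple p q r := ⟨by simpa only [one_div] using hpqr.symm⟩
  have := MeasureTheory.MemLp.smul (𝕜 := ℝ) (r := r) hg hf
  exact this

lemma mul_memℒp2 {f g : Ωm → ℝ} (hf : MemLp f 4 μ) (hg : MemLp g 4 μ) :
    MemLp (fun ω => f ω * g ω) 2 μ :=
  mul_memℒp' hf hg (by
    simp only [one_div]
    rw [← ENNReal.ofReal_ofNat 2, ← ENNReal.ofReal_ofNat 4,
      ← ENNReal.ofReal_inv_of_pos (by norm_num),
      ← ENNReal.ofReal_inv_of_pos (by norm_num),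
      ← ENNReal.ofReal_add (by norm_num) (by norm_num)]
    norm_num)

lemma mul_integrable {f g : Ωm → ℝ} (hf : MemLp f 2 μ) (hg : MemLp g 2 μ) :
    Integrable (fun ω => f ω * g ω) μ :=
  memLp_one_iff_integrable.mp (mul_memℒp' hf hg (by
    simp only [one_div, inv_one]
    rw [← ENNReal.ofReal_one, ← ENNReal.ofReal_ofNat 2,
      ← ENNReal.ofReal_inv_of_pos (by norm_num),
      ← ENNReal.ofReal_add (by norm_num) (by norm_num)]
    norm_num))

lemma integral_sum_sq (W : ℕ → Ωm → ℝ) (hW2 : ∀ j, MemLp (W j) 2 μ)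
    (hind : ∀ i j, i ≠ j → IndepFun (W i) (W j) μ)
    (hW0 : ∀ j, ∫ ω, W j ω ∂μ = 0) (s : Finset ℕ) :
    ∫ ω, (∑ j ∈ s, W j ω) ^ 2 ∂μ = ∑ j ∈ s, ∫ ω, (W j ω) ^ 2 ∂μ := by
  have hint : ∀ i j : ℕ, Integrable (fun ω => W i ω * W j ω) μ := fun i j =>
    mul_integrable (hW2 i) (hW2 j)
  have h1 : ∀ ω, (∑ j ∈ s, W j ω) ^ 2 = ∑ j ∈ s, ∑ j' ∈ s, W j ω * W j' ω := by
    intro ω; rw [sq, Finset.sum_mul_sum]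
  calc ∫ ω, (∑ j ∈ s, W j ω) ^ 2 ∂μ
      = ∫ ω, ∑ j ∈ s, ∑ j' ∈ s, W j ω * W j' ω ∂μ := by
        apply integral_congr_ae; filter_upwards with ω; exact h1 ω
    _ = ∑ j ∈ s, ∑ j' ∈ s, ∫ ω, W j ω * W j' ω ∂μ := by
        rw [integral_finset_sum]
        · exact Finset.sum_congr rfl fun j _ => integral_finset_sum s fun j' _ => hint j j'
        · exact fun j _ => integrable_finset_sum s fun j' _ => hint j j'
    _ = ∑ j ∈ s, ∫ ω, (W j ω) ^ 2 ∂μ := by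
        apply Finset.sum_congr rfl
        intro j hj
        rw [Finset.sum_eq_single_of_mem j hj]
        · simp [sq]
        · intro j' _ hne
          have := (hind j j' (Ne.symm hne)).integral_mul_eq_mul_integral
            ((hW2 j).integrable one_le_two).1 ((hW2 j').integrable one_le_two).1
          rw [show (fun ω => W j ω * W j' ω) = (W j * W j') from rfl, this,
            hW0 j, hW0 j', mul_zero]

section Master
variable {m d : ℕ}

lemma master (μ : Measure Ωm) [IsProbabilityMeasure μ]
    (It : ℕ → Ωm → Fin m → ℝ) (Xt : ℕ → Ωm → Fin d → ℝ)
    (hmeast : ∀ j, Measurable fun ω => (It j ω, Xt j ω))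
    (hiid : iIndepFun (fun j ω => (It j ω, Xt j ω)) μ)
    (hid : ∀ j, IdentDistrib (fun ω => (It j ω, Xt j ω)) (fun ω => (It 0 ω, Xt 0 ω)) μ μ)
    (hIt4 : ∀ j k, MemLp (fun ω => It j ω k) 4 μ)
    (hXt4 : ∀ j l, MemLp (fun ω => Xt j ω l) 4 μ)
    (s : Finset ℕ) (q : ℕ) (hcard : s.card = q) (hq0 : 0 < q)
    (c : Matrix (Fin m) (Fin d) ℝ)
    (hc : ∀ a l, c a l = ∫ ω, It 0 ω a * Xt 0 ω l ∂μ) :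
    Integrable (fun ω => (m:ℝ) * ∑ l : Fin d, ∑ l' : Fin d,
        ((m:ℝ) * ∑ a, c a l * ((q:ℝ)⁻¹ * ∑ j ∈ s, It j ω a * Xt j ω l' - c a l')) ^ 2) μ
    ∧ ∫ ω, (m:ℝ) * ∑ l : Fin d, ∑ l' : Fin d,
        ((m:ℝ) * ∑ a, c a l * ((q:ℝ)⁻¹ * ∑ j ∈ s, It j ω a * Xt j ω l' - c a l')) ^ 2 ∂μ
      ≤ (m:ℝ)^3 / q * ((d:ℝ) *
          ((opNorm (varMat μ (fun ω (p : Fin m × Fin d) => It 0 ω p.1 * Xt 0 ω p.2))) *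
          ∑ a, ∑ l, c a l ^ 2)) := by
  have hqR : (q:ℝ) ≠ 0 := Nat.cast_ne_zero.mpr hq0.ne'
  set Z : Ωm → Fin m × Fin d → ℝ := fun ω p => It 0 ω p.1 * Xt 0 ω p.2 with hZ
  set V : Matrix (Fin m × Fin d) (Fin m × Fin d) ℝ := varMat μ Z with hV
  set opV : ℝ := opNorm V with hopV
  have hopV0 : 0 ≤ opV := opNorm_nonneg V
  -- the W random variables
  set W : Fin d → Fin d → ℕ → Ωm → ℝ :=
    fun l l' j ω => ∑ a, c a l * (It j ω a * Xt j ω l' - c a l') with hW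
  set φ : Fin d → Fin d → (Fin m → ℝ) × (Fin d → ℝ) → ℝ :=
    fun l l' uv => ∑ a, c a l * (uv.1 a * uv.2 l' - c a l') with hφ
  have hφm : ∀ l l', Measurable (φ l l') := by
    intro l l'
    apply Finset.measurable_sum
    intro a _
    exact (((measurable_pi_apply a).comp measurable_fst).mul
      ((measurable_pi_apply l').comp measurable_snd)).sub measurable_const |>.const_mul _
  -- mean of products
  have hPint : ∀ j a l', ∫ ω, It j ω a * Xt j ω l' ∂μ = c a l' := by
    intro j a l'
    rw [hc]
    exact ((hid j).comp (show Measurable fun uv : (Fin m → ℝ) × (Fin d → ℝ) => uv.1 a * uv.2 l'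
      from ((measurable_pi_apply a).comp measurable_fst).mul
        ((measurable_pi_apply l').comp measurable_snd))).integral_eq
  have hP2 : ∀ j a l', MemLp (fun ω => It j ω a * Xt j ω l') 2 μ :=
    fun j a l' => mul_memℒp2 (hIt4 j a) (hXt4 j l')
  have htm2 : ∀ l l' j (a : Fin m),
      MemLp (fun ω => c a l * (It j ω a * Xt j ω l' - c a l')) 2 μ :=
    fun l l' j a => (((hP2 j a l').sub (memLp_const _)).const_mul _)
  have hW2 : ∀ l l' j, MemLp (W l l' j) 2 μ := by
    intro l l' j
    exact memLp_finset_sum Finset.univ (fun a _ => htm2 l l' j a)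
  have hW0 : ∀ l l' j, ∫ ω, W l l' j ω ∂μ = 0 := by
    intro l l' j
    rw [hW]
    rw [integral_finset_sum _ (fun a _ => ((htm2 l l' j a).integrable one_le_two))]
    apply Finset.sum_eq_zero
    intro a _
    rw [integral_const_mul, integral_sub ((hP2 j a l').integrable one_le_two)
      (integrable_const _), hPint j a l', integral_const]
    simp
  have hiW : ∀ l l', iIndepFun (W l l') μ := by
    intro l l'
    have := hiid.comp (fun _ => φ l l') (fun _ => hφm l l')
    exact this
  have hWid : ∀ l l' j, ∫ ω, (W l l' j ω) ^ 2 ∂μ = ∫ ω, (W l l' 0 ω) ^ 2 ∂μ := by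
    intro l l' j
    have h1 : IdentDistrib (fun ω => W l l' j ω) (fun ω => W l l' 0 ω) μ μ :=
      (hid j).comp (hφm l l')
    exact (h1.comp (measurable_id.pow_const 2)).integral_eq
  -- variance identity for W at time 0
  have hvarid : ∀ l l', ∫ ω, (W l l' 0 ω) ^ 2 ∂μ
      = ∑ a, c a l * ∑ a', c a' l * V (a, l') (a', l') := by
    intro l l'
    have hintprod : ∀ (a a' : Fin m), Integrable (fun ω =>
        (c a l * (It 0 ω a * Xt 0 ω l' - c a l')) *
        (c a' l * (It 0 ω a' * Xt 0 ω l' - c a' l'))) μ :=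
      fun a a' => mul_integrable (htm2 l l' 0 a) (htm2 l l' 0 a')
    calc ∫ ω, (W l l' 0 ω) ^ 2 ∂μ
        = ∫ ω, ∑ a, ∑ a', (c a l * (It 0 ω a * Xt 0 ω l' - c a l')) *
            (c a' l * (It 0 ω a' * Xt 0 ω l' - c a' l')) ∂μ := by
          apply integral_congr_ae; filter_upwards with ω
          rw [hW]; rw [sq, Finset.sum_mul_sum]
      _ = ∑ a, ∑ a', ∫ ω, (c a l * (It 0 ω a * Xt 0 ω l' - c a l')) *
            (c a' l * (It 0 ω a' * Xt 0 ω l' - c a' l')) ∂μ := by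
          rw [integral_finset_sum _ (fun a _ => integrable_finset_sum _ (fun a' _ => hintprod a a'))]
          exact Finset.sum_congr rfl fun a _ => integral_finset_sum _ fun a' _ => hintprod a a'
      _ = ∑ a, c a l * ∑ a', c a' l * V (a, l') (a', l') := by
          rw [Finset.sum_congr rfl (fun a _ => (Finset.mul_sum _ _ _ : c a l * ∑ a', c a' l * V (a, l') (a', l') = _))]
          apply Finset.sum_congr rfl; intro a _
          apply Finset.sum_congr rfl; intro a' _
          -- single covariance term
          have hPP : Integrable (fun ω => (It 0 ω a * Xt 0 ω l') * (It 0 ω a' * Xt 0 ω l')) μ :=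
            mul_integrable (hP2 0 a l') (hP2 0 a' l')
          have hPa : Integrable (fun ω => It 0 ω a * Xt 0 ω l') μ := (hP2 0 a l').integrable one_le_two
          have hPa' : Integrable (fun ω => It 0 ω a' * Xt 0 ω l') μ := (hP2 0 a' l').integrable one_le_two
          have hexp : ∀ ω, (c a l * (It 0 ω a * Xt 0 ω l' - c a l')) *
              (c a' l * (It 0 ω a' * Xt 0 ω l' - c a' l'))
              = (c a l * c a' l) * ((It 0 ω a * Xt 0 ω l') * (It 0 ω a' * Xt 0 ω l')
                - c a l' * (It 0 ω a' * Xt 0 ω l') - c a' l' * (It 0 ω a * Xt 0 ω l')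
                + c a l' * c a' l') := by intro ω; ring
          calc ∫ ω, (c a l * (It 0 ω a * Xt 0 ω l' - c a l')) *
                (c a' l * (It 0 ω a' * Xt 0 ω l' - c a' l')) ∂μ
              = (c a l * c a' l) * ∫ ω, ((It 0 ω a * Xt 0 ω l') * (It 0 ω a' * Xt 0 ω l')
                - c a l' * (It 0 ω a' * Xt 0 ω l') - c a' l' * (It 0 ω a * Xt 0 ω l')
                + c a l' * c a' l') ∂μ := by
                rw [← integral_const_mul]
                exact integral_congr_ae (Filter.Eventually.of_forall hexp)
            _ = (c a l * c a' l) * (∫ ω, (It 0 ω a * Xt 0 ω l') * (It 0 ω a' * Xt 0 ω l') ∂μ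
                - c a l' * c a' l') := by
                congr 1
                have hA : Integrable (fun ω => (It 0 ω a * Xt 0 ω l') * (It 0 ω a' * Xt 0 ω l')
                    - c a l' * (It 0 ω a' * Xt 0 ω l')) μ := hPP.sub (hPa'.const_mul _)
                have hB : Integrable (fun ω => ((It 0 ω a * Xt 0 ω l') * (It 0 ω a' * Xt 0 ω l')
                    - c a l' * (It 0 ω a' * Xt 0 ω l')) - c a' l' * (It 0 ω a * Xt 0 ω l')) μ :=
                  hA.sub (hPa.const_mul _)
                rw [integral_add hB (integrable_const _),
                  integral_sub hA (hPa.const_mul _),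
                  integral_sub hPP (hPa'.const_mul _),
                  integral_const_mul, integral_const_mul, integral_const,
                  hPint 0 a l', hPint 0 a' l']
                simp; ring
            _ = c a l * (c a' l * V (a, l') (a', l')) := by
                have hVval : V (a, l') (a', l')
                    = ∫ ω, (It 0 ω a * Xt 0 ω l') * (It 0 ω a' * Xt 0 ω l') ∂μ
                      - c a l' * c a' l' := by
                  rw [hV]
                  show (∫ ω, Z ω (a, l') * Z ω (a', l') ∂μ)
                      - (∫ ω, Z ω (a, l') ∂μ) * (∫ ω, Z ω (a', l') ∂μ) = _
                  rw [hZ]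
                  simp only []
                  rw [hPint 0 a l', hPint 0 a' l']
                rw [hVval]; ring
  -- quadratic form bound
  have hquad : ∀ l l', ∑ a, c a l * ∑ a', c a' l * V (a, l') (a', l')
      ≤ opV * ∑ a, c a l ^ 2 := by
    intro l l'
    set x : Fin m × Fin d → ℝ := fun p => if p.2 = l' then c p.1 l else 0 with hx
    have hsum : ∀ G : Fin m × Fin d → ℝ,
        ∑ p : Fin m × Fin d, x p * G p = ∑ a, c a l * G (a, l') := by
      intro G
      rw [Fintype.sum_prod_type]
      apply Finset.sum_congr rfl
      intro a _
      calc ∑ b, x (a, b) * G (a, b)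
          = ∑ b, (if b = l' then c a l * G (a, b) else 0) := by
            apply Finset.sum_congr rfl; intro b _
            by_cases hb : b = l' <;> simp [hx, hb]
        _ = c a l * G (a, l') := by
            rw [Finset.sum_ite_eq' Finset.univ l' (fun b => c a l * G (a, b))]
            simp
    have hqf := quadform_le V x
    have hL : ∑ p, ∑ p', x p * V p p' * x p'
        = ∑ a, c a l * ∑ a', c a' l * V (a, l') (a', l') := by
      calc ∑ p, ∑ p', x p * V p p' * x p'
          = ∑ p, x p * (∑ p', V p p' * x p') := by
            apply Finset.sum_congr rfl; intro p _
            rw [Finset.mul_sum]; apply Finset.sum_congr rfl; intro p' _; ring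
        _ = ∑ a, c a l * (∑ p', V (a, l') p' * x p') := hsum _
        _ = ∑ a, c a l * ∑ a', c a' l * V (a, l') (a', l') := by
            apply Finset.sum_congr rfl; intro a _
            congr 1
            calc ∑ p', V (a, l') p' * x p' = ∑ p', x p' * V (a, l') p' := by
                  apply Finset.sum_congr rfl; intro p' _; ring
              _ = ∑ a', c a' l * V (a, l') (a', l') := hsum _
    have hR : ∑ p, x p ^ 2 = ∑ a, c a l ^ 2 := by
      calc ∑ p, x p ^ 2 = ∑ p, x p * x p := by
            apply Finset.sum_congr rfl; intro p _; rw [sq]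
        _ = ∑ a, c a l * x (a, l') := hsum x
        _ = ∑ a, c a l ^ 2 := by
            apply Finset.sum_congr rfl; intro a _; simp [hx, sq]
    rw [← hL, ← hR]
    exact hqf
  -- rewrite the empirical entries in terms of sums of W
  have hWrw : ∀ l l' ω, (∑ a, c a l * ((q:ℝ)⁻¹ * ∑ j ∈ s, It j ω a * Xt j ω l' - c a l'))
      = (q:ℝ)⁻¹ * ∑ j ∈ s, W l l' j ω := by
    intro l l' ω
    have h2 : ∑ j ∈ s, W l l' j ω
        = ∑ a, ∑ j ∈ s, c a l * (It j ω a * Xt j ω l' - c a l') := by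
      rw [hW]; exact Finset.sum_comm
    rw [h2, Finset.mul_sum]
    apply Finset.sum_congr rfl
    intro a _
    have h3 : ∑ j ∈ s, c a l * (It j ω a * Xt j ω l' - c a l')
        = c a l * ((∑ j ∈ s, It j ω a * Xt j ω l') - (q:ℝ) * c a l') := by
      rw [← Finset.mul_sum, Finset.sum_sub_distrib, Finset.sum_const, hcard, nsmul_eq_mul]
    rw [h3]
    field_simp
    try ring
  have hS2 : ∀ l l', MemLp (fun ω => ∑ j ∈ s, W l l' j ω) 2 μ :=
    fun l l' => memLp_finset_sum s (fun j _ => hW2 l l' j)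
  have hterm_int : ∀ l l', Integrable (fun ω =>
      ((m:ℝ) * ∑ a, c a l * ((q:ℝ)⁻¹ * ∑ j ∈ s, It j ω a * Xt j ω l' - c a l')) ^ 2) μ := by
    intro l l'
    have heq : (fun ω => ((m:ℝ) * ∑ a, c a l *
          ((q:ℝ)⁻¹ * ∑ j ∈ s, It j ω a * Xt j ω l' - c a l')) ^ 2)
        = fun ω => ((m:ℝ) * (q:ℝ)⁻¹)^2 *
            ((∑ j ∈ s, W l l' j ω) * (∑ j ∈ s, W l l' j ω)) := by
      funext ω; rw [hWrw]; ring
    rw [heq]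
    exact (mul_integrable (hS2 l l') (hS2 l l')).const_mul _
  have hgint : Integrable (fun ω => (m:ℝ) * ∑ l : Fin d, ∑ l' : Fin d,
      ((m:ℝ) * ∑ a, c a l * ((q:ℝ)⁻¹ * ∑ j ∈ s, It j ω a * Xt j ω l' - c a l')) ^ 2) μ :=
    (integrable_finset_sum _ fun l _ =>
      integrable_finset_sum _ fun l' _ => hterm_int l l').const_mul _
  refine ⟨hgint, ?_⟩
  have hqRpos : (0:ℝ) < q := by exact_mod_cast hq0
  have hterm_val : ∀ l l', ∫ ω, ((m:ℝ) * ∑ a, c a l *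
        ((q:ℝ)⁻¹ * ∑ j ∈ s, It j ω a * Xt j ω l' - c a l')) ^ 2 ∂μ
      ≤ (m:ℝ)^2 / q * (opV * ∑ a, c a l ^ 2) := by
    intro l l'
    have heq : (fun ω => ((m:ℝ) * ∑ a, c a l *
          ((q:ℝ)⁻¹ * ∑ j ∈ s, It j ω a * Xt j ω l' - c a l')) ^ 2)
        = fun ω => ((m:ℝ) * (q:ℝ)⁻¹)^2 * ((∑ j ∈ s, W l l' j ω) ^ 2) := by
      funext ω; rw [hWrw]; ring
    rw [heq, integral_const_mul,
      integral_sum_sq (W l l') (hW2 l l') (fun i j hij => (hiW l l').indepFun hij)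
        (hW0 l l') s]
    have hsumval : ∑ j ∈ s, ∫ ω, (W l l' j ω) ^ 2 ∂μ
        = (q:ℝ) * ∫ ω, (W l l' 0 ω) ^ 2 ∂μ := by
      rw [Finset.sum_congr rfl (fun j _ => hWid l l' j), Finset.sum_const, hcard, nsmul_eq_mul]
    rw [hsumval, hvarid]
    calc ((m:ℝ) * (q:ℝ)⁻¹)^2 * ((q:ℝ) * ∑ a, c a l * ∑ a', c a' l * V (a, l') (a', l'))
        ≤ ((m:ℝ) * (q:ℝ)⁻¹)^2 * ((q:ℝ) * (opV * ∑ a, c a l ^ 2)) := by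
          apply mul_le_mul_of_nonneg_left _ (by positivity)
          exact mul_le_mul_of_nonneg_left (hquad l l') hqRpos.le
      _ = (m:ℝ)^2 / q * (opV * ∑ a, c a l ^ 2) := by
          field_simp
  calc ∫ ω, (m:ℝ) * ∑ l : Fin d, ∑ l' : Fin d,
        ((m:ℝ) * ∑ a, c a l * ((q:ℝ)⁻¹ * ∑ j ∈ s, It j ω a * Xt j ω l' - c a l')) ^ 2 ∂μ
      = (m:ℝ) * ∑ l : Fin d, ∑ l' : Fin d, ∫ ω,
        ((m:ℝ) * ∑ a, c a l * ((q:ℝ)⁻¹ * ∑ j ∈ s, It j ω a * Xt j ω l' - c a l')) ^ 2 ∂μ := by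
        rw [integral_const_mul,
          integral_finset_sum _ (fun l _ => integrable_finset_sum _ (fun l' _ => hterm_int l l'))]
        congr 1
        exact Finset.sum_congr rfl fun l _ => integral_finset_sum _ fun l' _ => hterm_int l l'
    _ ≤ (m:ℝ) * ∑ l : Fin d, ∑ l' : Fin d, (m:ℝ)^2 / q * (opV * ∑ a, c a l ^ 2) := by
        apply mul_le_mul_of_nonneg_left _ (Nat.cast_nonneg m)
        exact Finset.sum_le_sum fun l _ => Finset.sum_le_sum fun l' _ => hterm_val l l'
    _ = (m:ℝ)^3 / q * ((d:ℝ) * (opV * ∑ a, ∑ l, c a l ^ 2)) := by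
        have hsc : ∑ l : Fin d, ∑ a, c a l ^ 2 = ∑ a, ∑ l, c a l ^ 2 := Finset.sum_comm
        simp only [Finset.sum_const, Finset.card_univ, Fintype.card_fin, nsmul_eq_mul]
        simp only [← Finset.mul_sum]
        try rw [hsc]
        try ring
end Master

lemma tail_bound (μ : Measure Ωm) [IsProbabilityMeasure μ]
    {d m : ℕ} (Mf : Ωm → Matrix (Fin d) (Fin d) ℝ)
    (hmeas : Measurable fun ω => (m:ℝ) * ∑ l : Fin d, ∑ l' : Fin d, (Mf ω l l') ^ 2)
    (hint : Integrable (fun ω => (m:ℝ) * ∑ l : Fin d, ∑ l' : Fin d, (Mf ω l l') ^ 2) μ)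
    {B δ : ℝ} (hδ : 0 < δ)
    (hB : ∫ ω, (m:ℝ) * ∑ l : Fin d, ∑ l' : Fin d, (Mf ω l l') ^ 2 ∂μ ≤ B) :
    μ {ω | Real.sqrt (max B 0 / δ) + 1 < Real.sqrt (m:ℝ) * opNorm (Mf ω)}
      < ENNReal.ofReal δ := by
  set g : Ωm → ℝ := fun ω => (m:ℝ) * ∑ l : Fin d, ∑ l' : Fin d, (Mf ω l l') ^ 2 with hgdef
  have hg0 : ∀ ω, 0 ≤ g ω := by
    intro ω
    apply mul_nonneg (Nat.cast_nonneg m)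
    exact Finset.sum_nonneg fun l _ => Finset.sum_nonneg fun l' _ => sq_nonneg _
  set C' : ℝ := Real.sqrt (max B 0 / δ) + 1 with hC'def
  have hC'0 : 0 < C' := by positivity
  have hptw : ∀ ω, Real.sqrt (m:ℝ) * opNorm (Mf ω) ≤ Real.sqrt (g ω) := by
    intro ω
    calc Real.sqrt (m:ℝ) * opNorm (Mf ω)
        ≤ Real.sqrt (m:ℝ) * Real.sqrt (∑ l : Fin d, ∑ l' : Fin d, (Mf ω l l') ^ 2) :=
          mul_le_mul_of_nonneg_left (opNorm_le_frob _) (Real.sqrt_nonneg _)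
      _ = Real.sqrt (g ω) := by rw [← Real.sqrt_mul (Nat.cast_nonneg m)]
  have hsub : {ω | C' < Real.sqrt (m:ℝ) * opNorm (Mf ω)}
      ⊆ {ω | ENNReal.ofReal (C' ^ 2) ≤ ENNReal.ofReal (g ω)} := by
    intro ω hω
    simp only [Set.mem_setOf_eq] at hω ⊢
    have h1 : C' < Real.sqrt (g ω) := lt_of_lt_of_le hω (hptw ω)
    have h2 : C' ^ 2 < g ω := (Real.lt_sqrt hC'0.le).mp h1
    exact ENNReal.ofReal_le_ofReal h2.le
  have hmark := mul_meas_ge_le_lintegral₀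
    (μ := μ) (f := fun ω => ENNReal.ofReal (g ω))
    ((ENNReal.measurable_ofReal.comp hmeas).aemeasurable) (ENNReal.ofReal (C' ^ 2))
  have hlint : ∫⁻ ω, ENNReal.ofReal (g ω) ∂μ = ENNReal.ofReal (∫ ω, g ω ∂μ) :=
    (ofReal_integral_eq_lintegral_ofReal hint (Filter.Eventually.of_forall hg0)).symm
  have hε0 : ENNReal.ofReal (C' ^ 2) ≠ 0 := by
    rw [Ne, ENNReal.ofReal_eq_zero, not_le]
    positivity
  have hεtop : ENNReal.ofReal (C' ^ 2) ≠ ⊤ := ENNReal.ofReal_ne_top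
  have hmu : μ {x | ENNReal.ofReal (C' ^ 2) ≤ ENNReal.ofReal (g x)}
      ≤ ENNReal.ofReal (∫ ω, g ω ∂μ) / ENNReal.ofReal (C' ^ 2) := by
    rw [ENNReal.le_div_iff_mul_le (Or.inl hε0) (Or.inl hεtop), mul_comm, ← hlint]
    exact hmark
  calc μ {ω | C' < Real.sqrt (m:ℝ) * opNorm (Mf ω)}
      ≤ μ {x | ENNReal.ofReal (C' ^ 2) ≤ ENNReal.ofReal (g x)} := measure_mono hsub
    _ ≤ ENNReal.ofReal (∫ ω, g ω ∂μ) / ENNReal.ofReal (C' ^ 2) := hmu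
    _ ≤ ENNReal.ofReal (max B 0) / ENNReal.ofReal (C' ^ 2) := by
        gcongr
        exact hB.trans (le_max_left _ _)
    _ = ENNReal.ofReal (max B 0 / C' ^ 2) := (ENNReal.ofReal_div_of_pos (by positivity)).symm
    _ < ENNReal.ofReal δ := by
        rw [ENNReal.ofReal_lt_ofReal_iff hδ]
        have hBnn : (0:ℝ) ≤ max B 0 := le_max_right _ _
        rw [div_lt_iff₀ (by positivity)]
        have hs : Real.sqrt (max B 0 / δ) ^ 2 = max B 0 / δ := Real.sq_sqrt (by positivity)
        have h6 : max B 0 = (max B 0 / δ) * δ := by field_simp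
        have h7 : C' ^ 2 = (max B 0 / δ) + 2 * Real.sqrt (max B 0 / δ) + 1 := by
          rw [hC'def, add_sq, hs]; ring
        rw [h7]
        nlinarith [Real.sqrt_nonneg (max B 0 / δ)]

/-- Scaled error rates, part (i): under Assumption 4, writing
`c̄ = √m Cov(I,X)`, `E_k = √m(Ĉov_k(Ĩ,X̃) − Cov(I,X))` and
`E = √m(Ĉov(Ĩ,X̃) − Cov(I,X))`, for each fixed fold `k`,
`‖c̄ᵀE_k‖_op = O_p(m^{-1/2})` and `‖c̄ᵀE‖_op = O_p(m^{-1/2})`. -/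
theorem stmt_14
    (d K : ℕ) (hK : 2 ≤ K) (βstar : Fin d → ℝ)
    (Ω : ℕ → Type) [mΩ : ∀ m, MeasurableSpace (Ω m)]
    (μ : ∀ m, Measure (Ω m)) (hprob : ∀ m, IsProbabilityMeasure (μ m))
    -- for each instrument dimension m, i.i.d. samples of the two systems
    (I : ∀ m, ℕ → Ω m → Fin m → ℝ) (X : ∀ m, ℕ → Ω m → Fin d → ℝ)
    (Y : ∀ m, ℕ → Ω m → ℝ) (ε : ∀ m, ℕ → Ω m → ℝ)
    (It : ∀ m, ℕ → Ω m → Fin m → ℝ) (Xt : ∀ m, ℕ → Ω m → Fin d → ℝ)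
    -- sample sizes with n/m → r, ñ/m → r̃; ñ is split into K equal folds of size q
    (n nt q : ℕ → ℕ) (hfold : ∀ m, nt m = K * q m)
    (r rt : ℝ) (hr : 0 < r) (hrt : 0 < rt)
    (hrlim : Tendsto (fun (m : ℕ) => (n m : ℝ) / m) atTop (𝓝 r))
    (hrtlim : Tendsto (fun (m : ℕ) => (nt m : ℝ) / m) atTop (𝓝 rt))
    -- measurability
    (hmeas : ∀ m i, Measurable fun ω => (I m i ω, X m i ω, Y m i ω))
    (hmeast : ∀ m j, Measurable fun ω => (It m j ω, Xt m j ω))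
    -- i.i.d. within each sample, independence across samples
    (hiid1 : ∀ m, iIndepFun
      (fun i ω => (I m i ω, X m i ω, Y m i ω)) (μ m))
    (hid1 : ∀ m i, IdentDistrib (fun ω => (I m i ω, X m i ω, Y m i ω))
      (fun ω => (I m 0 ω, X m 0 ω, Y m 0 ω)) (μ m) (μ m))
    (hiid2 : ∀ m, iIndepFun
      (fun j ω => (It m j ω, Xt m j ω)) (μ m))
    (hid2 : ∀ m j, IdentDistrib (fun ω => (It m j ω, Xt m j ω))
      (fun ω => (It m 0 ω, Xt m 0 ω)) (μ m) (μ m))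
    (hindep : ∀ m, IndepFun (fun ω (i : ℕ) => (I m i ω, X m i ω, Y m i ω))
      (fun ω (j : ℕ) => (It m j ω, Xt m j ω)) (μ m))
    -- bounded fourth moments
    (hI4 : ∀ m i k, MemLp (fun ω => I m i ω k) 4 (μ m))
    (hX4 : ∀ m i l, MemLp (fun ω => X m i ω l) 4 (μ m))
    (hY4 : ∀ m i, MemLp (Y m i) 4 (μ m))
    (hIt4 : ∀ m j k, MemLp (fun ω => It m j ω k) 4 (μ m))
    (hXt4 : ∀ m j l, MemLp (fun ω => Xt m j ω l) 4 (μ m))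
    -- all variables are centered
    (hIc : ∀ m i k, ∫ ω, I m i ω k ∂(μ m) = 0)
    (hXc : ∀ m i l, ∫ ω, X m i ω l ∂(μ m) = 0)
    (hYc : ∀ m i, ∫ ω, Y m i ω ∂(μ m) = 0)
    (hItc : ∀ m j k, ∫ ω, It m j ω k ∂(μ m) = 0)
    (hXtc : ∀ m j l, ∫ ω, Xt m j ω l ∂(μ m) = 0)
    -- structural model and Assumption 1
    (hmodel : ∀ m i ω, Y m i ω = (∑ l, X m i ω l * βstar l) + ε m i ω)
    (hexo : ∀ m i,
      (μ m)[ε m i | MeasurableSpace.comap (I m i) inferInstance] =ᵐ[μ m] 0)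
    (hcov : ∀ m, covMat (μ m) (It m 0) (Xt m 0) = covMat (μ m) (I m 0) (X m 0))
    -- Assumption 4: Q = lim m·Cov(Ĩ,X̃)ᵀCov(Ĩ,X̃) exists and is positive definite
    (Q : Matrix (Fin d) (Fin d) ℝ) (hQpd : Q.PosDef)
    (hQ : Tendsto
      (fun (m : ℕ) => (m : ℝ) •
        ((covMat (μ m) (It m 0) (Xt m 0))ᵀ * covMat (μ m) (It m 0) (Xt m 0)))
      atTop (𝓝 Q))
    -- Assumption 4: uniform operator-norm bounds
    (C : ℝ)
    (hopIX : ∀ m : ℕ,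
      (m : ℝ) * opNorm (varMat (μ m)
        (fun ω (p : Fin m × Fin d) => It m 0 ω p.1 * Xt m 0 ω p.2)) ≤ C)
    (hopIY : ∀ m : ℕ,
      (m : ℝ) * opNorm (varMat (μ m) (fun ω k => I m 0 ω k * Y m 0 ω)) ≤ C)
    :
    -- conclusion: ‖c̄ᵀE_k‖_op = O_p(m^{-1/2}) for each fold k,
    -- and ‖c̄ᵀE‖_op = O_p(m^{-1/2})
    (∀ k : Fin K, ∀ δ > (0:ℝ), ∃ C' > (0:ℝ), ∃ M : ℕ, ∀ m ≥ M,
      μ m {ω | C' < Real.sqrt (m : ℝ) * opNorm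
          ((Real.sqrt (m : ℝ) • covMat (μ m) (I m 0) (X m 0))ᵀ *
            (Real.sqrt (m : ℝ) •
              (foldCovHat (It m) (Xt m) (q m) (k : ℕ) ω
                - covMat (μ m) (I m 0) (X m 0))))}
        < ENNReal.ofReal δ)
    ∧ (∀ δ > (0:ℝ), ∃ C' > (0:ℝ), ∃ M : ℕ, ∀ m ≥ M,
      μ m {ω | C' < Real.sqrt (m : ℝ) * opNorm
          ((Real.sqrt (m : ℝ) • covMat (μ m) (I m 0) (X m 0))ᵀ *
            (Real.sqrt (m : ℝ) •
              (covHat (It m) (Xt m) (nt m) ω - covMat (μ m) (I m 0) (X m 0))))}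
        < ENNReal.ofReal δ) := by
  haveI := hprob
  have hKR : (0:ℝ) < K := by
    have : (0:ℕ) < K := lt_of_lt_of_le (by norm_num) hK
    exact_mod_cast this
  -- rewrite hQ in terms of covMat of (I, X)
  simp only [hcov] at hQ
  -- trace convergence
  set trm : ℕ → ℝ := fun m => ∑ a, ∑ l, covMat (μ m) (I m 0) (X m 0) a l ^ 2 with htrm
  have htrm0 : ∀ m, 0 ≤ trm m := fun m =>
    Finset.sum_nonneg fun a _ => Finset.sum_nonneg fun l _ => sq_nonneg _
  have hent : ∀ l : Fin d, Tendsto (fun m : ℕ => ((m:ℝ) •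
      ((covMat (μ m) (I m 0) (X m 0))ᵀ * covMat (μ m) (I m 0) (X m 0))) l l)
      atTop (𝓝 (Q l l)) := by
    intro l
    have hcont : Continuous (fun A : Matrix (Fin d) (Fin d) ℝ => A l l) :=
      (continuous_apply l).comp (continuous_apply (A := fun _ : Fin d => Fin d → ℝ) l)
    exact (hcont.tendsto Q).comp hQ
  have htrQ : Tendsto (fun m : ℕ => (m:ℝ) * trm m) atTop (𝓝 (∑ l, Q l l)) := by
    have h1 := tendsto_finset_sum (Finset.univ : Finset (Fin d)) (fun l _ => hent l)
    have h2 : (fun m : ℕ => ∑ l, ((m:ℝ) •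
        ((covMat (μ m) (I m 0) (X m 0))ᵀ * covMat (μ m) (I m 0) (X m 0))) l l)
        = fun m : ℕ => (m:ℝ) * trm m := by
      funext m
      simp only [htrm, Matrix.smul_apply, Matrix.mul_apply, Matrix.transpose_apply,
        smul_eq_mul]
      simp only [Finset.mul_sum]
      rw [Finset.sum_comm]
      simp only [pow_two]
    rw [← h2]
    exact h1
  set T : ℝ := (∑ l, Q l l) + 1 with hT
  have hTev : ∀ᶠ m : ℕ in atTop, (m:ℝ) * trm m ≤ T :=
    htrQ.eventually (eventually_le_nhds (lt_add_one _))
  have hT0 : 0 ≤ T := by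
    have h0 : (0:ℝ) ≤ ∑ l, Q l l :=
      ge_of_tendsto' htrQ (fun m => mul_nonneg (Nat.cast_nonneg m) (htrm0 m))
    rw [hT]; linarith
  have hC0 : (0:ℝ) ≤ C :=
    le_trans (mul_nonneg (Nat.cast_nonneg 1) (opNorm_nonneg _)) (hopIX 1)
  -- q m / m → rt / K
  have hqlim : Tendsto (fun m : ℕ => (q m : ℝ) / m) atTop (𝓝 (rt / K)) := by
    have h1 := hrtlim.div_const (K:ℝ)
    have h2 : (fun m : ℕ => ((nt m : ℝ) / m) / K) = fun m : ℕ => (q m : ℝ) / m := by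
      funext m
      rw [hfold m]
      push_cast
      rw [div_div, mul_comm (m:ℝ) (K:ℝ), mul_div_mul_left _ _ (ne_of_gt hKR)]
    rw [← h2]; exact h1
  have hlt : rt / (2 * K) < rt / K := by
    apply div_lt_div_of_pos_left hrt hKR
    linarith
  have hqev : ∀ᶠ m : ℕ in atTop, rt / (2 * K) < (q m : ℝ) / m :=
    hqlim.eventually (eventually_gt_nhds hlt)
  have hmev : ∀ᶠ m : ℕ in atTop, 1 ≤ m := eventually_ge_atTop 1
  obtain ⟨M, hM⟩ := Filter.eventually_atTop.mp ((hTev.and hqev).and hmev)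
  set B : ℝ := (2 * K / rt) * ((d:ℝ) * (C * T)) with hB
  -- the common core
  have key : ∀ δ : ℝ, 0 < δ → ∀ mm, M ≤ mm → ∀ (s : Finset ℕ) (qq : ℕ),
      s.card = qq → 0 < qq → ((mm:ℝ) / (qq:ℝ) ≤ 2 * K / rt) →
      μ mm {ω | Real.sqrt (max B 0 / δ) + 1 < Real.sqrt (mm : ℝ) * opNorm
          ((Real.sqrt (mm : ℝ) • covMat (μ mm) (I mm 0) (X mm 0))ᵀ *
            (Real.sqrt (mm : ℝ) •
              (Matrix.of (fun a l => (qq:ℝ)⁻¹ * ∑ j ∈ s, It mm j ω a * Xt mm j ω l)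
                - covMat (μ mm) (I mm 0) (X mm 0))))}
        < ENNReal.ofReal δ := by
    intro δ hδ mm hmM s qq hcard hqq0 hmq
    obtain ⟨⟨hT1, _⟩, hm1⟩ := hM mm hmM
    set cb : Matrix (Fin mm) (Fin d) ℝ := covMat (μ mm) (I mm 0) (X mm 0) with hcb
    have hcbe : ∀ a l, cb a l = ∫ ω, It mm 0 ω a * Xt mm 0 ω l ∂(μ mm) := by
      intro a l
      rw [hcb, ← hcov mm]
      rfl
    obtain ⟨hint0, hbound0⟩ := master (μ mm) (It mm) (Xt mm) (hmeast mm) (hiid2 mm)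
      (hid2 mm) (hIt4 mm) (hXt4 mm) s qq hcard hqq0 cb hcbe
    have hsq : Real.sqrt (mm:ℝ) * Real.sqrt (mm:ℝ) = (mm:ℝ) :=
      Real.mul_self_sqrt (Nat.cast_nonneg _)
    have hentry : ∀ (ω : Ω mm) (l l' : Fin d),
        ((Real.sqrt (mm : ℝ) • cb)ᵀ *
          (Real.sqrt (mm : ℝ) •
            (Matrix.of (fun a l'' => (qq:ℝ)⁻¹ * ∑ j ∈ s, It mm j ω a * Xt mm j ω l'')
              - cb))) l l'
        = (mm:ℝ) * ∑ a, cb a l *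
            ((qq:ℝ)⁻¹ * ∑ j ∈ s, It mm j ω a * Xt mm j ω l' - cb a l') := by
      intro ω l l'
      simp only [Matrix.mul_apply, Matrix.transpose_apply, Matrix.smul_apply,
        smul_eq_mul, Matrix.sub_apply, Matrix.of_apply]
      rw [Finset.mul_sum]
      apply Finset.sum_congr rfl
      intro a _
      linear_combination (cb a l *
        ((qq:ℝ)⁻¹ * ∑ j ∈ s, It mm j ω a * Xt mm j ω l' - cb a l')) * hsq
    have hgeq : (fun ω => (mm:ℝ) * ∑ l : Fin d, ∑ l' : Fin d,
          (((Real.sqrt (mm : ℝ) • cb)ᵀ *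
            (Real.sqrt (mm : ℝ) •
              (Matrix.of (fun a l'' => (qq:ℝ)⁻¹ * ∑ j ∈ s, It mm j ω a * Xt mm j ω l'')
                - cb))) l l') ^ 2)
        = (fun ω => (mm:ℝ) * ∑ l : Fin d, ∑ l' : Fin d,
          ((mm:ℝ) * ∑ a, cb a l *
            ((qq:ℝ)⁻¹ * ∑ j ∈ s, It mm j ω a * Xt mm j ω l' - cb a l')) ^ 2) := by
      funext ω
      congr 1
      apply Finset.sum_congr rfl; intro l _
      apply Finset.sum_congr rfl; intro l' _
      rw [hentry ω l l']
    have hItm : ∀ j a, Measurable fun ω => It mm j ω a :=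
      fun j a => (measurable_pi_apply a).comp (measurable_fst.comp (hmeast mm j))
    have hXtm : ∀ j l, Measurable fun ω => Xt mm j ω l :=
      fun j l => (measurable_pi_apply l).comp (measurable_snd.comp (hmeast mm j))
    have hgm : Measurable (fun ω => (mm:ℝ) * ∑ l : Fin d, ∑ l' : Fin d,
        ((mm:ℝ) * ∑ a, cb a l *
          ((qq:ℝ)⁻¹ * ∑ j ∈ s, It mm j ω a * Xt mm j ω l' - cb a l')) ^ 2) := by
      apply Measurable.const_mul
      apply Finset.measurable_sum; intro l _
      apply Finset.measurable_sum; intro l' _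
      apply Measurable.pow_const
      apply Measurable.const_mul
      apply Finset.measurable_sum; intro a _
      apply Measurable.const_mul
      apply Measurable.sub _ measurable_const
      apply Measurable.const_mul
      apply Finset.measurable_sum; intro j _
      exact (hItm j a).mul (hXtm j l')
    -- bound the integral by B
    have hopV0 : 0 ≤ opNorm (varMat (μ mm)
        (fun ω (p : Fin mm × Fin d) => It mm 0 ω p.1 * Xt mm 0 ω p.2)) := opNorm_nonneg _
    have h2 := hopIX mm
    have h3 : (mm:ℝ) * (∑ a, ∑ l, cb a l ^ 2) ≤ T := hT1
    have hmq0 : (0:ℝ) ≤ (mm:ℝ) / (qq:ℝ) := by positivity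
    have hfb : (mm:ℝ)^3 / qq * ((d:ℝ) *
          ((opNorm (varMat (μ mm)
            (fun ω (p : Fin mm × Fin d) => It mm 0 ω p.1 * Xt mm 0 ω p.2))) *
          ∑ a, ∑ l, cb a l ^ 2)) ≤ B := by
      have hrw : (mm:ℝ)^3 / qq * ((d:ℝ) *
            ((opNorm (varMat (μ mm)
              (fun ω (p : Fin mm × Fin d) => It mm 0 ω p.1 * Xt mm 0 ω p.2))) *
            ∑ a, ∑ l, cb a l ^ 2))
          = ((mm:ℝ) / qq) * ((d:ℝ) * (((mm:ℝ) * opNorm (varMat (μ mm)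
              (fun ω (p : Fin mm × Fin d) => It mm 0 ω p.1 * Xt mm 0 ω p.2))) *
            ((mm:ℝ) * ∑ a, ∑ l, cb a l ^ 2))) := by ring
      rw [hrw, hB]
      have hstep1 : ((mm:ℝ) * opNorm (varMat (μ mm)
            (fun ω (p : Fin mm × Fin d) => It mm 0 ω p.1 * Xt mm 0 ω p.2))) *
          ((mm:ℝ) * ∑ a, ∑ l, cb a l ^ 2) ≤ C * T := by
        apply mul_le_mul h2 h3 (mul_nonneg (Nat.cast_nonneg mm)
          (Finset.sum_nonneg fun a _ => Finset.sum_nonneg fun l _ => sq_nonneg _)) hC0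
      have hstep2 : (d:ℝ) * (((mm:ℝ) * opNorm (varMat (μ mm)
            (fun ω (p : Fin mm × Fin d) => It mm 0 ω p.1 * Xt mm 0 ω p.2))) *
          ((mm:ℝ) * ∑ a, ∑ l, cb a l ^ 2)) ≤ (d:ℝ) * (C * T) :=
        mul_le_mul_of_nonneg_left hstep1 (Nat.cast_nonneg d)
      calc ((mm:ℝ) / qq) * ((d:ℝ) * (((mm:ℝ) * opNorm (varMat (μ mm)
              (fun ω (p : Fin mm × Fin d) => It mm 0 ω p.1 * Xt mm 0 ω p.2))) *
            ((mm:ℝ) * ∑ a, ∑ l, cb a l ^ 2)))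
          ≤ ((mm:ℝ) / qq) * ((d:ℝ) * (C * T)) :=
            mul_le_mul_of_nonneg_left hstep2 hmq0
        _ ≤ (2 * K / rt) * ((d:ℝ) * (C * T)) :=
            mul_le_mul_of_nonneg_right hmq
              (mul_nonneg (Nat.cast_nonneg d) (mul_nonneg hC0 hT0))
    have hmeas' : Measurable (fun ω => (mm:ℝ) * ∑ l : Fin d, ∑ l' : Fin d,
          (((Real.sqrt (mm : ℝ) • cb)ᵀ *
            (Real.sqrt (mm : ℝ) •
              (Matrix.of (fun a l'' => (qq:ℝ)⁻¹ * ∑ j ∈ s, It mm j ω a * Xt mm j ω l'')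
                - cb))) l l') ^ 2) := by
      rw [hgeq]; exact hgm
    have hint' : Integrable (fun ω => (mm:ℝ) * ∑ l : Fin d, ∑ l' : Fin d,
          (((Real.sqrt (mm : ℝ) • cb)ᵀ *
            (Real.sqrt (mm : ℝ) •
              (Matrix.of (fun a l'' => (qq:ℝ)⁻¹ * ∑ j ∈ s, It mm j ω a * Xt mm j ω l'')
                - cb))) l l') ^ 2) (μ mm) := by
      rw [hgeq]; exact hint0
    have hB' : ∫ ω, ((mm:ℝ) * ∑ l : Fin d, ∑ l' : Fin d,
          (((Real.sqrt (mm : ℝ) • cb)ᵀ *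
            (Real.sqrt (mm : ℝ) •
              (Matrix.of (fun a l'' => (qq:ℝ)⁻¹ * ∑ j ∈ s, It mm j ω a * Xt mm j ω l'')
                - cb))) l l') ^ 2) ∂(μ mm) ≤ B := by
      rw [hgeq]
      exact hbound0.trans hfb
    exact tail_bound (μ mm)
      (fun ω => ((Real.sqrt (mm : ℝ) • cb)ᵀ *
        (Real.sqrt (mm : ℝ) •
          (Matrix.of (fun a l'' => (qq:ℝ)⁻¹ * ∑ j ∈ s, It mm j ω a * Xt mm j ω l'')
            - cb)))) hmeas' hint' hδ hB'
  -- facts about q m for m ≥ M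
  have hqfacts : ∀ mm, M ≤ mm → 0 < q mm ∧ (mm:ℝ) / (q mm : ℝ) ≤ 2 * K / rt := by
    intro mm hmM
    obtain ⟨⟨_, hq1⟩, hm1⟩ := hM mm hmM
    have hm0R : (0:ℝ) < mm := by exact_mod_cast lt_of_lt_of_le (by norm_num) hm1
    have hrtK : (0:ℝ) < rt / (2 * K) := by positivity
    have hq0R : (0:ℝ) < (q mm : ℝ) := by
      have h1 : (0:ℝ) < (q mm:ℝ) / mm := lt_trans hrtK hq1
      have h2 : (q mm:ℝ) / mm * mm = (q mm:ℝ) := div_mul_cancel₀ _ (ne_of_gt hm0R)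
      nlinarith [mul_pos h1 hm0R]
    constructor
    · exact_mod_cast hq0R
    · have hle : rt / (2 * K) ≤ (q mm:ℝ) / mm := hq1.le
      have hinv := one_div_le_one_div_of_le hrtK hle
      rw [one_div_div, one_div_div] at hinv
      exact hinv
  constructor
  · intro k δ hδ
    refine ⟨Real.sqrt (max B 0 / δ) + 1, by positivity, M, ?_⟩
    intro mm hmM
    obtain ⟨hq0, hmq⟩ := hqfacts mm hmM
    have hcard : (Finset.Ico ((k:ℕ) * q mm) (((k:ℕ) + 1) * q mm)).card = q mm := by
      rw [Nat.card_Ico]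
      have : ((k:ℕ) + 1) * q mm = (k:ℕ) * q mm + q mm := by ring
      rw [this, Nat.add_sub_cancel_left]
    exact key δ hδ mm hmM (Finset.Ico ((k:ℕ) * q mm) (((k:ℕ) + 1) * q mm)) (q mm)
      hcard hq0 hmq
  · intro δ hδ
    refine ⟨Real.sqrt (max B 0 / δ) + 1, by positivity, M, ?_⟩
    intro mm hmM
    obtain ⟨hq0, hmq⟩ := hqfacts mm hmM
    have hnt0 : 0 < nt mm := by
      rw [hfold mm]
      exact Nat.mul_pos (lt_of_lt_of_le (by norm_num) hK) hq0
    have hmq' : (mm:ℝ) / (nt mm : ℝ) ≤ 2 * K / rt := by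
      have hq0R : (0:ℝ) < (q mm : ℝ) := by exact_mod_cast hq0
      have hle : (q mm : ℝ) ≤ (nt mm : ℝ) := by
        rw [hfold mm]
        push_cast
        have hK1 : (1:ℝ) ≤ (K:ℝ) := by exact_mod_cast le_trans one_le_two hK
        nlinarith [hq0R, hK1]
      have hntR : (0:ℝ) < (nt mm : ℝ) := by exact_mod_cast hnt0
      calc (mm:ℝ) / (nt mm : ℝ) ≤ (mm:ℝ) / (q mm : ℝ) := by
            rcases Nat.eq_zero_or_pos mm with h0 | hpos
            · simp [h0]
            · have hmR : (0:ℝ) < (mm:ℝ) := by exact_mod_cast hpos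
              exact (div_le_div_iff_of_pos_left hmR hntR hq0R).mpr hle
        _ ≤ 2 * K / rt := hmq
    exact key δ hδ mm hmM (Finset.range (nt mm)) (nt mm) (Finset.card_range _) hnt0 hmq'
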